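/- If T ∈ B(X) is decomposable and K ∈ B(X) is algebraic with TK = KT, then T + K is decomposable. -/

import Mathlib

set_option maxHeartbeats 1000000
set_option synthInstance.maxHeartbeats 400000

open Filter Metric Polynomial

noncomputable section

variable {X : Type*} [NormedAddCommGroup X] [NormedSpace ℂ X]

/-- The commutator map `C(R,S)(A) = RA - AS`. -/
def commMap (R S : X →L[ℂ] X) : (X →L[ℂ] X) → (X →L[ℂ] X) := fun A => R ∘L A - A ∘L S

/-- Bishop's property (β) at a point `l0`. -/
def BishopBetaAt (T : X →L[ℂ] X) (l0 : ℂ) : Prop :=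
  ∃ v > (0 : ℝ), ∀ U : Set ℂ, IsOpen U → U ⊆ ball l0 v →
    ∀ f : ℕ → ℂ → X, (∀ n, AnalyticOnNhd ℂ (f n) U) →
      (∀ K ⊆ U, IsCompact K →
        TendstoUniformlyOn (fun n z => T (f n z) - z • f n z) 0 atTop K) →
      ∀ K ⊆ U, IsCompact K → TendstoUniformlyOn (fun n z => f n z) 0 atTop K

/-- The Banach-space dual (adjoint) operator `T*` acting on the dual space. -/
def dualOp (T : X →L[ℂ] X) : StrongDual ℂ X →L[ℂ] StrongDual ℂ X :=
  (ContinuousLinearMap.compL ℂ X X ℂ).flip T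

/-- `T` is decomposable iff both `T` and its dual have Bishop's property (β) everywhere. -/
def Decomposable (T : X →L[ℂ] X) : Prop :=
  (∀ l : ℂ, BishopBetaAt T l) ∧ ∀ l : ℂ, BishopBetaAt (dualOp T) l

section Aux

variable {Y : Type*} [NormedAddCommGroup Y] [NormedSpace ℂ Y]

lemma tuo_clm {s : Set ℂ} {F : ℕ → ℂ → Y} (A : Y →L[ℂ] Y)
    (h : TendstoUniformlyOn F 0 atTop s) :
    TendstoUniformlyOn (fun n z => A (F n z)) 0 atTop s := by
  rw [Metric.tendstoUniformlyOn_iff] at h ⊢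
  intro ε hε
  have hA : (0:ℝ) < ‖A‖ + 1 := by positivity
  filter_upwards [h (ε / (‖A‖ + 1)) (by positivity)] with n hn z hz
  have h2 := hn z hz
  simp only [Pi.zero_apply, dist_zero_left] at h2 ⊢
  calc ‖A (F n z)‖ ≤ ‖A‖ * ‖F n z‖ := A.le_opNorm _
    _ ≤ (‖A‖ + 1) * ‖F n z‖ := by nlinarith [norm_nonneg (F n z)]
    _ < (‖A‖ + 1) * (ε / (‖A‖ + 1)) := mul_lt_mul_of_pos_left h2 hA
    _ = ε := by field_simp

lemma constCase (p : ℂ[X]) (h0 : p.natDegree = 0) (hp : p ≠ 0) (K : Y →L[ℂ] Y)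
    (U : Set ℂ) (f : ℕ → ℂ → Y)
    (hker : ∀ n, ∀ z ∈ U, (aeval K p) (f n z) = 0) :
    ∀ Kc ⊆ U, IsCompact Kc → TendstoUniformlyOn (fun n z => f n z) 0 atTop Kc := by
  intro Kc hKU _
  have hc : p.coeff 0 ≠ 0 := by
    intro h
    exact hp (by rw [Polynomial.eq_C_of_natDegree_eq_zero h0, h, map_zero])
  have hz : ∀ n, ∀ z ∈ Kc, f n z = 0 := by
    intro n z hzK
    have h1 := hker n z (hKU hzK)
    rw [Polynomial.eq_C_of_natDegree_eq_zero h0] at h1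
    rw [aeval_C, Algebra.algebraMap_eq_smul_one, ContinuousLinearMap.smul_apply,
      ContinuousLinearMap.one_apply] at h1
    exact (smul_eq_zero.mp h1).resolve_left hc
  rw [Metric.tendstoUniformlyOn_iff]
  intro ε hε
  filter_upwards with n z hzK
  simp [hz n z hzK, hε]

/-- Main workhorse: localized property (β) for `T + K` on functions annihilated by `p(K)`. -/
lemma lemC : ∀ (m : ℕ) (p : ℂ[X]), p.natDegree ≤ m → p ≠ 0 →
    ∀ (T K : Y →L[ℂ] Y), (∀ l : ℂ, BishopBetaAt T l) → T * K = K * T →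
    ∀ l0 : ℂ, ∃ v > (0:ℝ), ∀ U : Set ℂ, IsOpen U → U ⊆ ball l0 v →
      ∀ f : ℕ → ℂ → Y, (∀ n, AnalyticOnNhd ℂ (f n) U) →
        (∀ n, ∀ z ∈ U, (aeval K p) (f n z) = 0) →
        (∀ Kc ⊆ U, IsCompact Kc →
          TendstoUniformlyOn (fun n z => (T + K) (f n z) - z • f n z) 0 atTop Kc) →
        ∀ Kc ⊆ U, IsCompact Kc → TendstoUniformlyOn (fun n z => f n z) 0 atTop Kc := by
  intro m
  induction m with
  | zero =>
    intro p hdeg hp T K hT hcomm l0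
    exact ⟨1, one_pos, fun U hU hUb f hf hker hconv =>
      constCase p (Nat.le_zero.mp hdeg) hp K U f hker⟩
  | succ m ih =>
    intro p hdeg hp T K hT hcomm l0
    by_cases h0 : p.natDegree = 0
    · exact ⟨1, one_pos, fun U hU hUb f hf hker hconv => constCase p h0 hp K U f hker⟩
    obtain ⟨lam, hlam⟩ := Complex.exists_root (f := p)
      (natDegree_pos_iff_degree_pos.mp (Nat.pos_of_ne_zero h0))
    obtain ⟨q, hq⟩ := (dvd_iff_isRoot).mpr hlam
    have hqne : q ≠ 0 := fun h => hp (by rw [hq, h, mul_zero])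
    have hXl : (X - C lam : ℂ[X]) ≠ 0 := X_sub_C_ne_zero lam
    have hdegq : q.natDegree ≤ m := by
      have h2 := natDegree_mul hXl hqne
      rw [← hq, natDegree_X_sub_C] at h2
      omega
    obtain ⟨v1, hv1, H1⟩ := ih q hdegq hqne T K hT hcomm l0
    obtain ⟨v2, hv2, H2⟩ := hT (l0 - lam)
    refine ⟨min v1 v2, lt_min hv1 hv2, fun U hU hUb f hf hker hconv => ?_⟩
    set A : Y →L[ℂ] Y := aeval K (X - C lam) with hA
    have hAeq : A = K - lam • 1 := by
      rw [hA, map_sub, aeval_X, aeval_C, Algebra.algebraMap_eq_smul_one]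
    have hAcomm : (T + K) * A = A * (T + K) := by
      rw [hAeq]
      simp only [mul_sub, sub_mul, add_mul, mul_add, mul_smul_comm, smul_mul_assoc,
        mul_one, one_mul, hcomm, smul_add]
      abel
    -- the functions g n z = A (f n z) are annihilated by q(K)
    have hgker : ∀ n, ∀ z ∈ U, (aeval K q) (A (f n z)) = 0 := by
      intro n z hz
      have hmul : aeval K q * A = aeval K p := by
        rw [hA, ← map_mul, mul_comm, ← hq]
      rw [← ContinuousLinearMap.mul_apply, hmul]
      exact hker n z hz
    have hganal : ∀ n, AnalyticOnNhd ℂ (fun z => A (f n z)) U :=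
      fun n => A.comp_analyticOnNhd (hf n)
    have hgconv : ∀ Kc ⊆ U, IsCompact Kc →
        TendstoUniformlyOn (fun n z => (T + K) (A (f n z)) - z • (A (f n z))) 0 atTop Kc := by
      intro Kc hKU hKc
      refine (tuo_clm A (hconv Kc hKU hKc)).congr ?_
      filter_upwards with n z hz
      show A ((T + K) (f n z) - z • f n z) = (T + K) (A (f n z)) - z • A (f n z)
      rw [map_sub, map_smul, ← ContinuousLinearMap.mul_apply, ← hAcomm,
        ContinuousLinearMap.mul_apply]
    have hgU : ∀ Kc ⊆ U, IsCompact Kc →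
        TendstoUniformlyOn (fun n z => A (f n z)) 0 atTop Kc :=
      H1 U hU (hUb.trans (ball_subset_ball (min_le_left _ _)))
        (fun n z => A (f n z)) hganal hgker hgconv
    -- T f_n - (z - lam) f_n → 0
    have hstep2 : ∀ Kc ⊆ U, IsCompact Kc →
        TendstoUniformlyOn (fun n z => T (f n z) - (z - lam) • f n z) 0 atTop Kc := by
      intro Kc hKU hKc
      have h := (hconv Kc hKU hKc).sub (hgU Kc hKU hKc)
      rw [sub_zero] at h
      refine h.congr ?_
      filter_upwards with n z hz
      simp only [Pi.sub_apply, hAeq, ContinuousLinearMap.sub_apply,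
        ContinuousLinearMap.add_apply, ContinuousLinearMap.smul_apply,
        ContinuousLinearMap.one_apply, sub_smul]
      abel
    -- shift by lam and apply property (β) of T at l0 - lam
    intro Kc hKU hKc
    set U' : Set ℂ := (fun w => w + lam) ⁻¹' U with hU'
    have hU'open : IsOpen U' := hU.preimage (by fun_prop)
    have hU'b : U' ⊆ ball (l0 - lam) v2 := by
      intro w hw
      have h1 : w + lam ∈ ball l0 (min v1 v2) := hUb hw
      rw [mem_ball] at h1 ⊢
      have h2 : dist w (l0 - lam) = dist (w + lam) l0 := by
        rw [Complex.dist_eq, Complex.dist_eq]; ring_nf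
      rw [h2]
      exact h1.trans_le (min_le_right _ _)
    have hf' : ∀ n, AnalyticOnNhd ℂ (fun w => f n (w + lam)) U' :=
      fun n => (hf n).comp (analyticOnNhd_id.add analyticOnNhd_const) (fun w hw => hw)
    have hconv' : ∀ Kc' ⊆ U', IsCompact Kc' →
        TendstoUniformlyOn (fun n w => T (f n (w + lam)) - w • f n (w + lam)) 0 atTop Kc' := by
      intro Kc' hK'U hK'c
      have himg : ((fun w => w + lam) '' Kc') ⊆ U := by
        rintro z ⟨w, hw, rfl⟩; exact hK'U hw
      have hcimg : IsCompact ((fun w => w + lam) '' Kc') := hK'c.image (by fun_prop)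
      have h := (hstep2 _ himg hcimg).comp (fun w => w + lam)
      refine (h.mono (Set.subset_preimage_image _ _)).congr ?_
      filter_upwards with n w hw
      simp only [Function.comp_apply, add_sub_cancel_right]
    have hβ := H2 U' hU'open hU'b (fun n w => f n (w + lam)) hf' hconv'
    have hK'sub : ((fun z => z - lam) '' Kc) ⊆ U' := by
      rintro w ⟨z, hz, rfl⟩
      show (z - lam) + lam ∈ U
      rw [sub_add_cancel]
      exact hKU hz
    have hK'c : IsCompact ((fun z => z - lam) '' Kc) := hKc.image (by fun_prop)
    have h := (hβ _ hK'sub hK'c).comp (fun z => z - lam)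
    refine (h.mono ?_).congr ?_
    · intro z hz
      exact Set.subset_preimage_image _ _ hz
    filter_upwards with n z hz
    simp only [Function.comp_apply, sub_add_cancel]

lemma dualOp_mul' (A B : X →L[ℂ] X) : dualOp (A * B) = dualOp B * dualOp A := by
  ext f x
  rfl

lemma dualOp_one' : dualOp (1 : X →L[ℂ] X) = 1 := by
  ext f x
  rfl

lemma dualOp_add' (A B : X →L[ℂ] X) : dualOp (A + B) = dualOp A + dualOp B := by
  unfold dualOp
  exact map_add _ A B

lemma dualOp_zero' : dualOp (0 : X →L[ℂ] X) = 0 := by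
  unfold dualOp
  exact map_zero _

lemma dualOp_smul' (c : ℂ) (A : X →L[ℂ] X) : dualOp (c • A) = c • dualOp A := by
  unfold dualOp
  exact map_smul _ c A

lemma dualOp_pow (A : X →L[ℂ] X) (n : ℕ) : dualOp (A ^ n) = (dualOp A) ^ n := by
  induction n with
  | zero => simpa using dualOp_one'
  | succ n ihn =>
    rw [pow_succ, dualOp_mul', ihn, pow_succ']

lemma dualOp_aeval (A : X →L[ℂ] X) (p : ℂ[X]) :
    aeval (dualOp A) p = dualOp (aeval A p) := by
  induction p using Polynomial.induction_on' with
  | add p q hp hq =>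
    rw [map_add, map_add, hp, hq, dualOp_add']
  | monomial n a =>
    rw [aeval_monomial, aeval_monomial, Algebra.algebraMap_eq_smul_one,
      Algebra.algebraMap_eq_smul_one, smul_mul_assoc, one_mul, smul_mul_assoc, one_mul,
      dualOp_smul', dualOp_pow]

end Aux

theorem stmt15 [CompleteSpace X] (T K : X →L[ℂ] X) (p : Polynomial ℂ)
    (hT : Decomposable T) (hp : p ≠ 0) (hpK : aeval K p = 0) (hcomm : T * K = K * T) :
    Decomposable (T + K) := by
  constructor
  · intro l
    obtain ⟨v, hv, H⟩ := lemC p.natDegree p le_rfl hp T K hT.1 hcomm l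
    refine ⟨v, hv, fun U hU hUb f hf hconv => ?_⟩
    exact H U hU hUb f hf (fun n z hz => by rw [hpK]; rfl) hconv
  · intro l
    have hadd : dualOp (T + K) = dualOp T + dualOp K := dualOp_add' T K
    have hker : aeval (dualOp K) p = 0 := by
      rw [dualOp_aeval, hpK, dualOp_zero']
    have hcomm' : dualOp T * dualOp K = dualOp K * dualOp T := by
      rw [← dualOp_mul', ← dualOp_mul', hcomm]
    rw [hadd]
    obtain ⟨v, hv, H⟩ := lemC p.natDegree p le_rfl hp (dualOp T) (dualOp K) hT.2 hcomm' l
    refine ⟨v, hv, fun U hU hUb f hf hconv => ?_⟩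
    exact H U hU hUb f hf (fun n z hz => by rw [hker]; rfl) hconv
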